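/- For real α > 0, γ > 0, β ≥ 0, the integral I = ∫_0^∞ e^{-αw}·w^β·(1+w)^{-γ} dw satisfies I ≥ 2^{1-γ}·e^{-(α+β+γ)} / (1 + α + β + γ). -/

import Mathlib

open Real MeasureTheory Set

lemma exp_integral_Ioi (l T : ℝ) (hl : 0 < l) :
    (∫ w in Ioi T, Real.exp (-l * w)) = Real.exp (-(l * T)) / l := by
  have := integral_comp_mul_left_Ioi (fun u => Real.exp (-u)) T hl
  simp only [smul_eq_mul] at this
  calc (∫ w in Ioi T, Real.exp (-l * w)) = ∫ w in Ioi T, Real.exp (-(l * w)) := by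
        simp [neg_mul]
    _ = l⁻¹ * ∫ x in Ioi (l * T), Real.exp (-x) := this
    _ = Real.exp (-(l * T)) / l := by
        rw [integral_exp_neg_Ioi]; field_simp

theorem integral_lower_bound (α β γ : ℝ) (hα : 0 < α) (hγ : 0 < γ) (hβ : 0 ≤ β) :
    (∫ w in Ioi (0 : ℝ), Real.exp (-α * w) * w ^ β * (1 + w) ^ (-γ)) ≥
      2 ^ (1 - γ) * Real.exp (-(α + β + γ)) / (1 + α + β + γ) := by
  set f : ℝ → ℝ := fun w => Real.exp (-α * w) * w ^ β * (1 + w) ^ (-γ) with hf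
  set l : ℝ := α + γ with hl
  have hl0 : 0 < l := by positivity
  -- measurability
  have hmeas : AEStronglyMeasurable f (volume.restrict (Ioi (0:ℝ))) := by
    apply Measurable.aestronglyMeasurable
    exact ((measurable_id.const_mul (-α)).exp.mul
      (measurable_id.pow_const β)).mul
      ((measurable_const.add measurable_id).pow_const (-γ))
  -- integrability of f on Ioi 0
  have hg : IntegrableOn (fun w : ℝ => w ^ β * Real.exp (-α * w)) (Ioi 0) := by
    have := integrableOn_rpow_mul_exp_neg_mul_rpow (p := 1) (s := β) (b := α)
      (by linarith) one_pos hα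
    simpa [Real.rpow_one] using this
  have hfint : IntegrableOn f (Ioi 0) := by
    apply Integrable.mono' hg hmeas
    rw [ae_restrict_iff' measurableSet_Ioi]
    refine ae_of_all _ fun w hw => ?_
    have hw0 : (0:ℝ) < w := hw
    have h1 : (0:ℝ) ≤ f w := by
      apply mul_nonneg (mul_nonneg (Real.exp_pos _).le _) _
      · exact Real.rpow_nonneg hw0.le _
      · exact Real.rpow_nonneg (by linarith) _
    rw [Real.norm_of_nonneg h1]
    have h2 : (1 + w) ^ (-γ) ≤ 1 :=
      Real.rpow_le_one_of_one_le_of_nonpos (by linarith) (by linarith)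
    calc f w ≤ Real.exp (-α * w) * w ^ β * 1 := by
          apply mul_le_mul_of_nonneg_left h2
          exact mul_nonneg (Real.exp_pos _).le (Real.rpow_nonneg hw0.le _)
      _ = w ^ β * Real.exp (-α * w) := by ring
  -- nonnegativity a.e.
  have hfnn : 0 ≤ᵐ[volume.restrict (Ioi (0:ℝ))] f := by
    filter_upwards [ae_restrict_mem measurableSet_Ioi] with w hw
    have hw0 : (0:ℝ) < w := hw
    show (0:ℝ) ≤ f w
    apply mul_nonneg (mul_nonneg (Real.exp_pos _).le _) _
    · exact Real.rpow_nonneg hw0.le _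
    · exact Real.rpow_nonneg (by linarith) _
  -- key lower bound for any T > 0
  have key : ∀ T : ℝ, 0 < T →
      Real.exp (β * (1 - 1/T)) * (Real.exp (-(l * T)) / l) ≤ ∫ w in Ioi (0:ℝ), f w := by
    intro T hT
    have hsub : Ioi T ⊆ Ioi (0:ℝ) := fun x hx => lt_trans hT hx
    have step1 : (∫ w in Ioi T, f w) ≤ ∫ w in Ioi (0:ℝ), f w :=
      setIntegral_mono_set hfint hfnn (HasSubset.Subset.eventuallyLE hsub)
    have step2 : (∫ w in Ioi T, Real.exp (β * (1 - 1/T)) * Real.exp (-l * w))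
        ≤ ∫ w in Ioi T, f w := by
      apply setIntegral_mono_on
      · exact (Integrable.const_mul (exp_neg_integrableOn_Ioi T hl0) _)
      · exact hfint.mono_set hsub
      · exact measurableSet_Ioi
      · intro w hw
        have hwT : T < w := hw
        have hw0 : (0:ℝ) < w := lt_trans hT hwT
        -- w ^ β ≥ exp (β * (1 - 1/w))
        have hlogw : 1 - 1/w ≤ Real.log w := by
          have := Real.log_le_sub_one_of_pos (x := 1/w) (by positivity)
          rw [Real.log_div one_ne_zero (ne_of_gt hw0), Real.log_one] at this
          linarith
        have hwb : Real.exp (β * (1 - 1/w)) ≤ w ^ β := by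
          rw [Real.rpow_def_of_pos hw0]
          exact Real.exp_le_exp.2 (by nlinarith [mul_le_mul_of_nonneg_left hlogw hβ])
        -- (1+w) ^ (-γ) ≥ exp (-γ * w)
        have hlog1w : Real.log (1 + w) ≤ w := by
          have := Real.log_le_sub_one_of_pos (x := 1 + w) (by linarith)
          linarith
        have hwc : Real.exp (-γ * w) ≤ (1 + w) ^ (-γ) := by
          rw [Real.rpow_def_of_pos (by linarith)]
          apply Real.exp_le_exp.2
          nlinarith [mul_le_mul_of_nonneg_left hlog1w hγ.le]
        have h1T : 1 - 1/T ≤ 1 - 1/w := by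
          have : 1/w ≤ 1/T := one_div_le_one_div_of_le hT hwT.le
          linarith
        calc Real.exp (β * (1 - 1/T)) * Real.exp (-l * w)
            = Real.exp (-α * w) * Real.exp (β * (1 - 1/T)) * Real.exp (-γ * w) := by
              rw [hl]; rw [← Real.exp_add, ← Real.exp_add, ← Real.exp_add]; ring_nf
          _ ≤ Real.exp (-α * w) * w ^ β * (1 + w) ^ (-γ) := by
              apply mul_le_mul
              · apply mul_le_mul_of_nonneg_left _ (Real.exp_pos _).le
                exact le_trans (Real.exp_le_exp.2
                  (mul_le_mul_of_nonneg_left h1T hβ)) hwb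
              · exact hwc
              · exact (Real.exp_pos _).le
              · exact mul_nonneg (Real.exp_pos _).le (Real.rpow_nonneg hw0.le _)
    have step0 : (∫ w in Ioi T, Real.exp (β * (1 - 1/T)) * Real.exp (-l * w))
        = Real.exp (β * (1 - 1/T)) * (Real.exp (-(l * T)) / l) := by
      rw [integral_const_mul, exp_integral_Ioi _ _ hl0]
    linarith [step2, step1, step0 ▸ step2]
  -- reduce target
  have htwo : (2:ℝ) ^ (1 - γ) ≤ 2 := by
    calc (2:ℝ) ^ (1 - γ) ≤ (2:ℝ) ^ (1:ℝ) :=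
          Real.rpow_le_rpow_of_exponent_le one_le_two (by linarith)
      _ = 2 := Real.rpow_one 2
  have hden : (0:ℝ) < 1 + α + β + γ := by linarith
  have hred : 2 ^ (1 - γ) * Real.exp (-(α + β + γ)) / (1 + α + β + γ)
      ≤ 2 * Real.exp (-(l + β)) / (1 + l + β) := by
    have h1 : (1:ℝ) + l + β = 1 + α + β + γ := by rw [hl]; ring
    have h2 : l + β = α + β + γ := by rw [hl]; ring
    rw [h1, h2]
    exact div_le_div_of_nonneg_right (mul_le_mul_of_nonneg_right htwo (Real.exp_pos _).le) hden.le
  rw [ge_iff_le]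
  refine le_trans hred ?_
  rcases le_or_gt l (1 + β) with hcase | hcase
  · -- T = 1
    refine le_trans ?_ (key 1 one_pos)
    have : Real.exp (β * (1 - 1/1)) = 1 := by norm_num
    rw [this, one_mul, mul_one]
    rw [div_le_div_iff₀ (by linarith) hl0]
    have hexp : Real.exp (-(l + β)) ≤ Real.exp (-l) := Real.exp_le_exp.2 (by linarith)
    have h2l : 2 * l ≤ 1 + l + β := by linarith
    calc 2 * Real.exp (-(l + β)) * l ≤ Real.exp (-l) * (2 * l) := by
          nlinarith [Real.exp_pos (-(l+β)), Real.exp_pos (-l), hl0]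
      _ ≤ Real.exp (-l) * (1 + l + β) := by
          exact mul_le_mul_of_nonneg_left h2l (Real.exp_pos _).le
  · -- T = (1+β)/l
    have hb1 : (0:ℝ) < 1 + β := by linarith
    have hT : (0:ℝ) < (1 + β) / l := by positivity
    refine le_trans ?_ (key _ hT)
    have hlT : l * ((1 + β) / l) = 1 + β := by field_simp
    rw [hlT, ← mul_div_assoc, div_le_div_iff₀ (by linarith) hl0]
    -- need: 2 * exp(-(l+β)) * l ≤ exp(β(1 - l/(1+β))) * (exp(-(1+β))/1) * (1+l+β) ... careful
    -- goal : 2 * exp (-(l + β)) * l ≤ exp (β * (1 - 1/((1+β)/l))) * (exp (-(1+β))) / 1 ...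
    have h1T : 1 / ((1 + β) / l) = l / (1 + β) := by field_simp
    -- exp key bound : t ≤ exp (t - 1) for t = l/(1+β)
    have ht : l / (1 + β) ≤ Real.exp (l / (1 + β) - 1) := by
      have := Real.add_one_le_exp (l / (1 + β) - 1)
      linarith
    have hexpb : (1:ℝ) ≤ Real.exp β := by
      rw [← Real.exp_zero]; exact Real.exp_le_exp.2 hβ
    -- exp(β(1 - l/(1+β))) * exp(-(1+β)) = exp(β) * exp(-βl/(1+β)) * exp(-1) * exp(-β) ...
    -- show: exp(β*(1 - l/(1+β))) * exp(-(1+β)) * (1+l+β) ≥ 2 * exp(-(l+β)) * l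
    -- equivalently exp(β - βl/(1+β) - 1 - β + l + β) * (1+l+β) ≥ 2l
    have hkey : Real.exp (β * (1 - l/(1+β))) * Real.exp (-(1+β))
        = Real.exp (-(l+β)) * Real.exp (β - 1 + l/(1+β)) * Real.exp (l * β /(1+β) - l * β/(1+β) - l + l) := by
      rw [← Real.exp_add, ← Real.exp_add, ← Real.exp_add]
      congr 1
      field_simp
      ring
    have hsimp : Real.exp (l * β /(1+β) - l * β/(1+β) - l + l) = 1 := by
      norm_num
    rw [h1T] at *
    rw [hkey, hsimp, mul_one]
    have hstep : l / (1 + β) ≤ Real.exp (β - 1 + l/(1+β)) := by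
      calc l / (1 + β) ≤ Real.exp (l / (1 + β) - 1) := ht
        _ ≤ Real.exp (β - 1 + l/(1+β)) := Real.exp_le_exp.2 (by linarith)
    have hfin : 2 * l ≤ Real.exp (β - 1 + l/(1+β)) * (1 + l + β) := by
      have h2 : 2 * (1 + β) ≤ 1 + l + β := by linarith
      have h3 : l / (1+β) * (1 + l + β) ≥ l / (1+β) * (2 * (1+β)) :=
        mul_le_mul_of_nonneg_left h2 (by positivity)
      have h4 : l / (1+β) * (2 * (1+β)) = 2 * l := by field_simp
      have h5 : l / (1+β) * (1 + l + β) ≤ Real.exp (β - 1 + l/(1+β)) * (1 + l + β) :=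
        mul_le_mul_of_nonneg_right hstep (by linarith)
      linarith
    calc 2 * Real.exp (-(l + β)) * l = Real.exp (-(l+β)) * (2 * l) := by ring
      _ ≤ Real.exp (-(l+β)) * (Real.exp (β - 1 + l/(1+β)) * (1 + l + β)) :=
          mul_le_mul_of_nonneg_left hfin (Real.exp_pos _).le
      _ = Real.exp (-(l+β)) * Real.exp (β - 1 + l/(1+β)) * (1 + l + β) := by ring
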